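/- Let α ∈ (0,1] and let μ be a probability distribution on the k-element subsets of [n] that is α-fractionally log-concave, i.e., (z₁,…,zₙ) ↦ log g_μ(z₁^α,…,zₙ^α) is concave on ℝ^n_{>0}. Then μ is (1/α)-entropically independent: for every probability distribution ν on the k-element subsets of [n] with supp(ν) ⊆ supp(μ), D(ν D_{k→1} ‖ μ D_{k→1}) ≤ (1/(αk))·D(ν ‖ μ). -/

import Mathlib

open Finset

/-- The generating polynomial `g_μ(z) = ∑_S μ(S) ∏_{i∈S} z_i`. -/
noncomputable def genPoly {n : ℕ} (μ : Finset (Fin n) → ℝ) (z : Fin n → ℝ) : ℝ :=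
  ∑ S : Finset (Fin n), μ S * ∏ i ∈ S, z i

/-- The `k → 1` down operator: `(ν D_{k→1})(i) = (1/k) ∑_{S ∋ i} ν(S)`. -/
noncomputable def down1 {n : ℕ} (k : ℕ) (ν : Finset (Fin n) → ℝ) (i : Fin n) : ℝ :=
  (1 / (k : ℝ)) * ∑ S ∈ Finset.univ.filter (fun S => i ∈ S), ν S

/-- KL divergence `D(ν ‖ μ) = ∑_x ν(x) log (ν(x)/μ(x))` on a finite type. -/
noncomputable def KLdiv {X : Type*} [Fintype X] (ν μ : X → ℝ) : ℝ :=
  ∑ x : X, ν x * Real.log (ν x / μ x)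

lemma sum_mul_sum_mem {n : ℕ} (f : Finset (Fin n) → ℝ) (c : Fin n → ℝ) :
    ∑ S : Finset (Fin n), f S * ∑ i ∈ S, c i
      = ∑ i : Fin n, (∑ S ∈ Finset.univ.filter (fun S => i ∈ S), f S) * c i := by
  simp_rw [Finset.mul_sum, Finset.sum_mul]
  exact Finset.sum_comm' (fun S i => by simp)

lemma gibbs {X : Type*} [Fintype X] (ν ρ : X → ℝ)
    (hν0 : ∀ x, 0 ≤ ν x) (hρ0 : ∀ x, 0 ≤ ρ x)
    (hν1 : ∑ x : X, ν x = 1) (hρ1 : ∑ x : X, ρ x ≤ 1)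
    (habs : ∀ x, ρ x = 0 → ν x = 0) :
    0 ≤ ∑ x : X, ν x * Real.log (ν x / ρ x) := by
  have key : ∑ x : X, ν x * Real.log (ρ x / ν x) ≤ 0 := by
    calc ∑ x : X, ν x * Real.log (ρ x / ν x) ≤ ∑ x : X, (ρ x - ν x) := by
          refine Finset.sum_le_sum fun x _ => ?_
          rcases eq_or_lt_of_le (hν0 x) with h0 | h0
          · simp [← h0, hρ0 x]
          · have hρx : 0 < ρ x := by
              rcases eq_or_lt_of_le (hρ0 x) with h1 | h1
              · exact absurd (habs x h1.symm) h0.ne'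
              · exact h1
            have hlog := Real.log_le_sub_one_of_pos (div_pos hρx h0)
            calc ν x * Real.log (ρ x / ν x) ≤ ν x * (ρ x / ν x - 1) :=
                  mul_le_mul_of_nonneg_left hlog h0.le
              _ = ρ x - ν x := by field_simp
      _ ≤ 0 := by rw [Finset.sum_sub_distrib, hν1]; linarith
  have heq : ∑ x : X, ν x * Real.log (ν x / ρ x)
      = - ∑ x : X, ν x * Real.log (ρ x / ν x) := by
    rw [← Finset.sum_neg_distrib]
    refine Finset.sum_congr rfl fun x _ => ?_
    rw [show ν x / ρ x = (ρ x / ν x)⁻¹ by rw [inv_div], Real.log_inv]; ring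
  rw [heq]; linarith

lemma genPoly_log_le {n : ℕ} (α : ℝ) (hα0 : 0 < α)
    (μ : Finset (Fin n) → ℝ) (hμ1 : ∑ S : Finset (Fin n), μ S = 1)
    (hFLC : ConcaveOn ℝ {z : Fin n → ℝ | ∀ i, 0 < z i}
      (fun z => Real.log (genPoly μ (fun i => z i ^ α))))
    (y : Fin n → ℝ) (hy : ∀ i, 0 < y i) :
    Real.log (genPoly μ (fun i => y i ^ α))
      ≤ α * ∑ S : Finset (Fin n), μ S * ∑ i ∈ S, (y i - 1) := by
  set d : Fin n → ℝ := fun i => y i - 1 with hd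
  set G : ℝ → ℝ := fun t => genPoly μ (fun i => (1 + t * d i) ^ α) with hG
  set φ : ℝ → ℝ := fun t => Real.log (G t) with hφdef
  have hG0 : G 0 = 1 := by
    simp [hG, genPoly, Real.one_rpow, hμ1]
  set D : ℝ := α * ∑ S : Finset (Fin n), μ S * ∑ i ∈ S, d i with hD
  have hG' : HasDerivAt G D 0 := by
    have hterm : ∀ S : Finset (Fin n),
        HasDerivAt (fun t => μ S * ∏ i ∈ S, (1 + t * d i) ^ α)
          (μ S * ∑ i ∈ S, α * d i) 0 := by
      intro S
      have hfac : ∀ i ∈ S, HasDerivAt (fun t : ℝ => (1 + t * d i) ^ α) (α * d i) 0 := by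
        intro i _
        have hin : HasDerivAt (fun t : ℝ => 1 + t * d i) (d i) 0 :=
          (hasDerivAt_mul_const (d i)).const_add 1
        have hout : HasDerivAt (fun x : ℝ => x ^ α) (α * (1:ℝ) ^ (α - 1)) ((fun t : ℝ => 1 + t * d i) 0) := by
          have h1 : (fun t : ℝ => 1 + t * d i) 0 = 1 := by simp
          rw [h1]
          exact Real.hasDerivAt_rpow_const (Or.inl one_ne_zero)
        have := hout.comp 0 hin
        simp only [Real.one_rpow, mul_one] at this
        exact this
      have hprod := HasDerivAt.fun_finsetProd hfac
      have heq : (∑ i ∈ S, (∏ j ∈ S.erase i, (fun t : ℝ => (1 + t * d j) ^ α) 0) • (α * d i))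
          = ∑ i ∈ S, α * d i := by
        refine Finset.sum_congr rfl fun i _ => ?_
        simp [Real.one_rpow]
      rw [heq] at hprod
      simpa [Finset.mul_sum] using hprod.const_mul (μ S)
    have hsum := HasDerivAt.fun_sum (fun S (_ : S ∈ (Finset.univ : Finset (Finset (Fin n)))) => hterm S)
    have hGeq : G = fun t => ∑ S : Finset (Fin n), μ S * ∏ i ∈ S, (1 + t * d i) ^ α := by
      funext t; rfl
    rw [hGeq]
    refine hsum.congr_deriv ?_
    symm
    rw [hD, Finset.mul_sum]
    refine Finset.sum_congr rfl fun S _ => ?_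
    rw [Finset.mul_sum, Finset.mul_sum, Finset.mul_sum]
    refine Finset.sum_congr rfl fun i _ => ?_
    ring
  have hφ' : HasDerivAt φ D 0 := by
    have := hG'.log (by rw [hG0]; norm_num)
    simpa [hφdef, hG0] using this
  have hφ0 : φ 0 = 0 := by simp [hφdef, hG0]
  have hFy : Real.log (genPoly μ (fun i => y i ^ α)) = φ 1 := by
    simp only [hφdef, hG]
    congr 1
    simp [genPoly, hd]
  have hslope : ∀ t ∈ Set.Ioo (0:ℝ) 1, φ 1 - φ 0 ≤ slope φ 0 t := by
    intro t ht
    have h1' : (1 : Fin n → ℝ) ∈ {z : Fin n → ℝ | ∀ i, 0 < z i} := fun i => one_pos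
    have hy' : y ∈ {z : Fin n → ℝ | ∀ i, 0 < z i} := hy
    have hcc := hFLC.2 h1' hy' (by linarith [ht.2] : (0:ℝ) ≤ 1 - t) ht.1.le (by ring)
    have harg : (1 - t) • (1 : Fin n → ℝ) + t • y = fun i => 1 + t * d i := by
      funext i
      simp only [hd, Pi.add_apply, Pi.smul_apply, Pi.one_apply, smul_eq_mul]
      ring
    rw [harg] at hcc
    have hcc' : (1 - t) * φ 0 + t * φ 1 ≤ φ t := by
      have e0 : φ 0 = (fun z : Fin n → ℝ => Real.log (genPoly μ fun i => z i ^ α)) 1 := by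
        rw [hφ0]; simp [genPoly, Real.one_rpow, hμ1]
      have e1 : φ 1 = (fun z : Fin n → ℝ => Real.log (genPoly μ fun i => z i ^ α)) y := by
        simp only [hφdef, hG]; congr 1; simp [genPoly, hd]
      have et : φ t = (fun z : Fin n → ℝ => Real.log (genPoly μ fun i => z i ^ α)) (fun i => 1 + t * d i) := rfl
      rw [e0, e1, et]
      simpa [smul_eq_mul] using hcc
    have ht0 : (0:ℝ) < t := ht.1
    rw [slope_def_field, sub_zero, le_div_iff₀ ht0]
    nlinarith [hcc']
  have hlim : φ 1 - φ 0 ≤ D := by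
    have htend : Filter.Tendsto (slope φ 0) (nhdsWithin 0 (Set.Ioi 0)) (nhds D) :=
      (hasDerivAt_iff_tendsto_slope.mp hφ').mono_left
        (nhdsWithin_mono _ (fun x hx => ne_of_gt hx))
    refine ge_of_tendsto htend ?_
    filter_upwards [Ioo_mem_nhdsGT_of_mem (by norm_num : (0:ℝ) ∈ Set.Ico 0 1)] with t ht
    exact hslope t ht
  rw [hFy]
  calc φ 1 ≤ D := by linarith
    _ = α * ∑ S : Finset (Fin n), μ S * ∑ i ∈ S, (y i - 1) := by rw [hD]

lemma down1_sum {n k : ℕ} (hk : k ≠ 0) (ν : Finset (Fin n) → ℝ)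
    (hνk : ∀ S, ν S ≠ 0 → S.card = k) (hν1 : ∑ S : Finset (Fin n), ν S = 1) :
    ∑ i : Fin n, down1 k ν i = 1 := by
  have hkpos : (0:ℝ) < k := Nat.cast_pos.mpr (Nat.pos_of_ne_zero hk)
  unfold down1
  rw [← Finset.mul_sum]
  have hswap := sum_mul_sum_mem ν (fun _ => (1:ℝ))
  simp only [mul_one] at hswap
  rw [← hswap]
  have hcongr : ∀ S : Finset (Fin n), ν S * ∑ _i ∈ S, (1:ℝ) = (k:ℝ) * ν S := by
    intro S
    by_cases h : ν S = 0
    · simp [h]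
    · rw [Finset.sum_const, hνk S h]
      push_cast
      ring
  rw [Finset.sum_congr rfl fun S _ => hcongr S, ← Finset.mul_sum, hν1, mul_one]
  field_simp

theorem stmt_4 (n k : ℕ) (α : ℝ) (hα0 : 0 < α) (hα1 : α ≤ 1)
    (μ : Finset (Fin n) → ℝ)
    (hμ0 : ∀ S, 0 ≤ μ S)
    (hμk : ∀ S, μ S ≠ 0 → S.card = k)
    (hμ1 : ∑ S : Finset (Fin n), μ S = 1)
    (hFLC : ConcaveOn ℝ {z : Fin n → ℝ | ∀ i, 0 < z i}
      (fun z => Real.log (genPoly μ (fun i => z i ^ α)))) :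
    ∀ ν : Finset (Fin n) → ℝ,
      (∀ S, 0 ≤ ν S) → (∀ S, ν S ≠ 0 → S.card = k) →
      (∑ S : Finset (Fin n), ν S = 1) → (∀ S, μ S = 0 → ν S = 0) →
      KLdiv (down1 k ν) (down1 k μ) ≤ (1 / (α * (k : ℝ))) * KLdiv ν μ := by
  intro ν hν0 hνk hν1 habs
  by_cases hk : k = 0
  · subst hk
    norm_num [down1, KLdiv]
  have hkpos : (0:ℝ) < (k:ℝ) := Nat.cast_pos.mpr (Nat.pos_of_ne_zero hk)
  set p := down1 k μ with hp
  set q := down1 k ν with hq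
  have hcolμ : ∀ i, ∑ S ∈ Finset.univ.filter (fun S => i ∈ S), μ S = (k:ℝ) * p i := by
    intro i; rw [hp]; unfold down1; field_simp
  have hcolν : ∀ i, ∑ S ∈ Finset.univ.filter (fun S => i ∈ S), ν S = (k:ℝ) * q i := by
    intro i; rw [hq]; unfold down1; field_simp
  have hq0 : ∀ i, 0 ≤ q i := by
    intro i; rw [hq]; unfold down1
    exact mul_nonneg (by positivity) (Finset.sum_nonneg fun S _ => hν0 S)
  have hp0 : ∀ i, 0 ≤ p i := by
    intro i; rw [hp]; unfold down1
    exact mul_nonneg (by positivity) (Finset.sum_nonneg fun S _ => hμ0 S)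
  have hqp : ∀ i, q i ≠ 0 → 0 < p i := by
    intro i hqi
    have h1 : ∑ S ∈ Finset.univ.filter (fun S => i ∈ S), ν S ≠ 0 := by
      intro h
      apply hqi
      have := hcolν i
      rw [h] at this
      have hk' : (k:ℝ) ≠ 0 := hkpos.ne'
      field_simp at this
      exact (mul_eq_zero.mp this.symm).resolve_left hk'
    obtain ⟨S, hS, hSν⟩ := Finset.exists_ne_zero_of_sum_ne_zero h1
    have hμS : 0 < μ S := by
      rcases eq_or_lt_of_le (hμ0 S) with h | h
      · exact absurd (habs S h.symm) hSν
      · exact h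
    have hpos : 0 < ∑ T ∈ Finset.univ.filter (fun T => i ∈ T), μ T :=
      Finset.sum_pos' (fun T _ => hμ0 T) ⟨S, hS, hμS⟩
    rw [hcolμ i] at hpos
    nlinarith
  have hsumq : ∑ i : Fin n, q i = 1 := down1_sum hk ν hνk hν1
  have hsump : ∑ i : Fin n, p i = 1 := down1_sum hk μ hμk hμ1
  have main : α * (k:ℝ) * KLdiv q p ≤ KLdiv ν μ := by
    refine le_of_forall_pos_le_add fun ε hε => ?_
    set ε' : ℝ := ε / (α * (k:ℝ)) with hε'
    have hε'pos : 0 < ε' := by positivity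
    set y : Fin n → ℝ := fun i => if q i = 0 then ε' else q i / p i with hy
    have hypos : ∀ i, 0 < y i := by
      intro i
      simp only [hy]
      split_ifs with h
      · exact hε'pos
      · exact div_pos ((hq0 i).lt_of_ne (Ne.symm h)) (hqp i h)
    set g := genPoly μ (fun i => y i ^ α) with hg
    have hgpos : 0 < g := by
      have hex : ∃ S, μ S ≠ 0 := by
        by_contra h
        push_neg at h
        simp [h] at hμ1
      obtain ⟨S₀, hS₀⟩ := hex
      rw [hg]; unfold genPoly
      refine Finset.sum_pos'
        (fun S _ => mul_nonneg (hμ0 S)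
          (Finset.prod_nonneg fun i _ => (Real.rpow_pos_of_pos (hypos i) α).le))
        ⟨S₀, Finset.mem_univ _, ?_⟩
      exact mul_pos ((hμ0 S₀).lt_of_ne (Ne.symm hS₀))
        (Finset.prod_pos fun i _ => Real.rpow_pos_of_pos (hypos i) α)
    set ρ : Finset (Fin n) → ℝ := fun S => μ S * (∏ i ∈ S, y i ^ α) / g with hρ
    have hρ0 : ∀ S, 0 ≤ ρ S := by
      intro S
      simp only [hρ]
      exact div_nonneg (mul_nonneg (hμ0 S)
        (Finset.prod_nonneg fun i _ => (Real.rpow_pos_of_pos (hypos i) α).le)) hgpos.le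
    have hρ1 : ∑ S : Finset (Fin n), ρ S = 1 := by
      simp only [hρ]
      rw [← Finset.sum_div]
      rw [show (∑ S : Finset (Fin n), μ S * ∏ i ∈ S, y i ^ α) = g from rfl]
      exact div_self hgpos.ne'
    have hρabs : ∀ S, ρ S = 0 → ν S = 0 := by
      intro S hS
      simp only [hρ] at hS
      have hP : 0 < ∏ i ∈ S, y i ^ α :=
        Finset.prod_pos fun i _ => Real.rpow_pos_of_pos (hypos i) α
      have hμS : μ S = 0 := by
        by_contra h
        have : 0 < μ S * (∏ i ∈ S, y i ^ α) / g :=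
          div_pos (mul_pos ((hμ0 S).lt_of_ne (Ne.symm h)) hP) hgpos
        exact this.ne' hS
      exact habs S hμS
    have hgibbs := gibbs ν ρ hν0 hρ0 hν1 (le_of_eq hρ1) hρabs
    have hlogP : ∀ S : Finset (Fin n),
        Real.log (∏ i ∈ S, y i ^ α) = α * ∑ i ∈ S, Real.log (y i) := by
      intro S
      rw [Real.log_prod (fun i _ => (Real.rpow_pos_of_pos (hypos i) α).ne'),
        Finset.mul_sum]
      exact Finset.sum_congr rfl fun i _ => Real.log_rpow (hypos i) α
    have hterm : ∀ S : Finset (Fin n), ν S * Real.log (ν S / ρ S)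
        = ν S * Real.log (ν S / μ S) - α * (ν S * ∑ i ∈ S, Real.log (y i))
          + ν S * Real.log g := by
      intro S
      by_cases hνS : ν S = 0
      · simp [hνS]
      have hνpos : 0 < ν S := (hν0 S).lt_of_ne (Ne.symm hνS)
      have hμS : 0 < μ S := by
        rcases eq_or_lt_of_le (hμ0 S) with h | h
        · exact absurd (habs S h.symm) hνS
        · exact h
      have hP : 0 < ∏ i ∈ S, y i ^ α :=
        Finset.prod_pos fun i _ => Real.rpow_pos_of_pos (hypos i) α
      simp only [hρ]
      have harg : ν S / (μ S * (∏ i ∈ S, y i ^ α) / g)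
          = ν S / μ S * g / (∏ i ∈ S, y i ^ α) := by
        field_simp
      rw [harg, Real.log_div (by positivity) hP.ne',
        Real.log_mul (by positivity) hgpos.ne', hlogP S]
      ring
    have hexp : ∑ S : Finset (Fin n), ν S * Real.log (ν S / ρ S)
        = KLdiv ν μ - α * (∑ S : Finset (Fin n), ν S * ∑ i ∈ S, Real.log (y i))
          + Real.log g := by
      rw [Finset.sum_congr rfl (fun S _ => hterm S), Finset.sum_add_distrib,
        Finset.sum_sub_distrib, ← Finset.mul_sum, ← Finset.sum_mul, hν1, one_mul]
      rfl
    have hmid : ∑ S : Finset (Fin n), ν S * ∑ i ∈ S, Real.log (y i)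
        = (k:ℝ) * ∑ i : Fin n, q i * Real.log (y i) := by
      rw [sum_mul_sum_mem ν (fun i => Real.log (y i)), Finset.mul_sum]
      refine Finset.sum_congr rfl fun i _ => ?_
      rw [hcolν i]; ring
    have hKLqp : ∑ i : Fin n, q i * Real.log (y i) = KLdiv q p := by
      rw [KLdiv]
      refine Finset.sum_congr rfl fun i _ => ?_
      by_cases h : q i = 0
      · simp [h]
      · simp only [hy]
        rw [if_neg h]
    have hlogg : Real.log g ≤ α * ∑ S : Finset (Fin n), μ S * ∑ i ∈ S, (y i - 1) := by
      rw [hg]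
      exact genPoly_log_le α hα0 μ hμ1 hFLC y hypos
    have hBound : ∑ S : Finset (Fin n), μ S * ∑ i ∈ S, (y i - 1)
        = (k:ℝ) * (∑ i : Fin n, p i * y i) - (k:ℝ) := by
      rw [sum_mul_sum_mem μ (fun i => y i - 1)]
      have hc : ∀ i : Fin n, (∑ S ∈ Finset.univ.filter (fun S => i ∈ S), μ S) * (y i - 1)
          = (k:ℝ) * (p i * y i) - (k:ℝ) * p i := by
        intro i; rw [hcolμ i]; ring
      rw [Finset.sum_congr rfl fun i _ => hc i, Finset.sum_sub_distrib,
        ← Finset.mul_sum, ← Finset.mul_sum, hsump, mul_one]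
    have hpy : ∑ i : Fin n, p i * y i ≤ 1 + ε' := by
      calc ∑ i : Fin n, p i * y i ≤ ∑ i : Fin n, (q i + ε' * p i) := by
            refine Finset.sum_le_sum fun i _ => ?_
            simp only [hy]
            split_ifs with h
            · rw [h, zero_add]
              nlinarith [hp0 i]
            · rw [mul_div_cancel₀ (q i) (hqp i h).ne']
              nlinarith [hp0 i, hε'pos.le]
        _ = 1 + ε' := by
            rw [Finset.sum_add_distrib, hsumq, ← Finset.mul_sum, hsump, mul_one]
    have h1 : 0 ≤ KLdiv ν μ - α * ((k:ℝ) * KLdiv q p) + Real.log g := by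
      rw [hexp, hmid, hKLqp] at hgibbs
      exact hgibbs
    have h2 : Real.log g ≤ α * (k:ℝ) * ε' := by
      calc Real.log g ≤ α * ((k:ℝ) * (∑ i : Fin n, p i * y i) - (k:ℝ)) := by
            rw [← hBound]; exact hlogg
        _ ≤ α * ((k:ℝ) * (1 + ε') - (k:ℝ)) := by
            have : (k:ℝ) * (∑ i : Fin n, p i * y i) ≤ (k:ℝ) * (1 + ε') :=
              mul_le_mul_of_nonneg_left hpy hkpos.le
            nlinarith
        _ = α * (k:ℝ) * ε' := by ring
    have hfin : α * (k:ℝ) * KLdiv q p ≤ KLdiv ν μ + α * (k:ℝ) * ε' := by linarith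
    calc α * (k:ℝ) * KLdiv q p ≤ KLdiv ν μ + α * (k:ℝ) * ε' := hfin
      _ = KLdiv ν μ + ε := by
          rw [hε']
          field_simp
  have hαk : 0 < α * (k:ℝ) := mul_pos hα0 hkpos
  calc KLdiv q p = (1 / (α * (k:ℝ))) * (α * (k:ℝ) * KLdiv q p) := by
        field_simp
    _ ≤ (1 / (α * (k:ℝ))) * KLdiv ν μ := by
        apply mul_le_mul_of_nonneg_left main (by positivity)
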